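/- Every real polynomial P on ℝ³×ℝ³ that is invariant under the simultaneous action of SO(3) (P(kx,ky)=P(x,y) for all k∈SO(3)) is invariant under the simultaneous action of O(3) (P(kx,ky)=P(x,y) for all k∈O(3)). -/
import Mathlib


open MeasureTheory Complex Matrix

noncomputable section

abbrev V3 := Fin 3 → ℝ
abbrev Mat3 := Matrix (Fin 3) (Fin 3) ℝ

instance : MeasurableSpace Mat3 := (inferInstance : MeasurableSpace (Fin 3 → Fin 3 → ℝ))

/-- The set of special orthogonal 3×3 real matrices. -/
def SO3 : Set Mat3 := {A | A * A.transpose = 1 ∧ A.det = 1}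

/-- `SO(3)`-invariance of a function on `ℝ³ × ℝ³` (simultaneous action on both factors). -/
def Inv3 (F : V3 × V3 → ℂ) : Prop :=
  ∀ k ∈ SO3, ∀ x y : V3, F (k.mulVec x, k.mulVec y) = F (x, y)

/-- `P` is a (real) polynomial function on `ℝ³ × ℝ³`. -/
def IsPolyFun6 (P : V3 × V3 → ℝ) : Prop :=
  ∃ Q : MvPolynomial (Fin 6) ℝ, ∀ p : V3 × V3,
    P p = MvPolynomial.eval ![p.1 0, p.1 1, p.1 2, p.2 0, p.2 1, p.2 2] Q

/-- In `ℝ³` there is a unit vector orthogonal to any two given vectors. -/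
lemma exists_unit_orth (x y : V3) : ∃ u : V3, u ⬝ᵥ u = 1 ∧ u ⬝ᵥ x = 0 ∧ u ⬝ᵥ y = 0 := by
  set f : V3 →ₗ[ℝ] (Fin 2 → ℝ) :=
    { toFun := fun u => ![u ⬝ᵥ x, u ⬝ᵥ y]
      map_add' := by intro a b; funext i; fin_cases i <;> simp [add_dotProduct]
      map_smul' := by intro c a; funext i; fin_cases i <;> simp [smul_dotProduct] } with hf
  have hker : LinearMap.ker f ≠ ⊥ := by
    apply LinearMap.ker_ne_bot_of_finrank_lt
    simp [Module.finrank_pi]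
  obtain ⟨v, hv, hv0⟩ := Submodule.exists_mem_ne_zero_of_ne_bot hker
  have hvx : v ⬝ᵥ x = 0 := by
    have := congrFun (LinearMap.mem_ker.mp hv) 0; simpa [hf] using this
  have hvy : v ⬝ᵥ y = 0 := by
    have := congrFun (LinearMap.mem_ker.mp hv) 1; simpa [hf] using this
  have hvv : 0 < v ⬝ᵥ v := by
    have : v ⬝ᵥ v ≠ 0 := fun h => hv0 (dotProduct_self_eq_zero.mp h)
    have hnn : 0 ≤ v ⬝ᵥ v := Finset.sum_nonneg fun i _ => mul_self_nonneg _
    exact lt_of_le_of_ne hnn (Ne.symm this)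
  set s : ℝ := (Real.sqrt (v ⬝ᵥ v))⁻¹ with hs
  refine ⟨s • v, ?_, ?_, ?_⟩
  · have h1 : (s • v) ⬝ᵥ (s • v) = s * (s * (v ⬝ᵥ v)) := by
      simp [smul_dotProduct, dotProduct_smul, smul_eq_mul]
    rw [h1, hs, ← mul_assoc]
    rw [show (Real.sqrt (v ⬝ᵥ v))⁻¹ * (Real.sqrt (v ⬝ᵥ v))⁻¹ = (Real.sqrt (v ⬝ᵥ v) * Real.sqrt (v ⬝ᵥ v))⁻¹ by ring,
      Real.mul_self_sqrt hvv.le]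
    exact inv_mul_cancel₀ hvv.ne'
  · simp [smul_dotProduct, hvx]
  · simp [smul_dotProduct, hvy]

/-- Rotation by π about the axis `u` (for `u` a unit vector): `2uuᵀ - I`. -/
def rotPi (u : V3) : Mat3 := Matrix.of fun i j => 2 * u i * u j - if i = j then 1 else 0

lemma rotPi_orth (u : V3) (hu : u ⬝ᵥ u = 1) :
    (rotPi u) * (rotPi u).transpose = 1 := by
  have h : u 0 * u 0 + u 1 * u 1 + u 2 * u 2 = 1 := by
    simpa [dotProduct, Fin.sum_univ_three] using hu
  ext i j
  fin_cases i <;> fin_cases j <;>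
    simp [rotPi, Matrix.mul_apply, Matrix.transpose_apply, Fin.sum_univ_three, Matrix.one_apply]
  · linear_combination (4 * u 0 * u 0) * h
  · linear_combination (4 * u 0 * u 1) * h
  · linear_combination (4 * u 0 * u 2) * h
  · linear_combination (4 * u 1 * u 0) * h
  · linear_combination (4 * u 1 * u 1) * h
  · linear_combination (4 * u 1 * u 2) * h
  · linear_combination (4 * u 2 * u 0) * h
  · linear_combination (4 * u 2 * u 1) * h
  · linear_combination (4 * u 2 * u 2) * h

lemma rotPi_det (u : V3) (hu : u ⬝ᵥ u = 1) : (rotPi u).det = 1 := by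
  have h : u 0 * u 0 + u 1 * u 1 + u 2 * u 2 = 1 := by
    simpa [dotProduct, Fin.sum_univ_three] using hu
  rw [Matrix.det_fin_three]
  simp only [rotPi, Matrix.of_apply, Fin.isValue, show ((0:Fin 3) = 0) = True by simp,
    show ((1:Fin 3) = 1) = True by simp, show ((2:Fin 3) = 2) = True by simp,
    show ((0:Fin 3) = 1) = False by simp [Fin.ext_iff], show ((0:Fin 3) = 2) = False by simp [Fin.ext_iff],
    show ((1:Fin 3) = 0) = False by simp [Fin.ext_iff], show ((1:Fin 3) = 2) = False by simp [Fin.ext_iff],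
    show ((2:Fin 3) = 0) = False by simp [Fin.ext_iff], show ((2:Fin 3) = 1) = False by simp [Fin.ext_iff],
    if_true, if_false]
  linear_combination (2:ℝ) * h

lemma rotPi_mulVec (u : V3) (x : V3) (hux : u ⬝ᵥ x = 0) :
    (rotPi u).mulVec x = -x := by
  have h : u 0 * x 0 + u 1 * x 1 + u 2 * x 2 = 0 := by
    simpa [dotProduct, Fin.sum_univ_three] using hux
  funext i
  fin_cases i <;>
    simp [rotPi, Matrix.mulVec, dotProduct, Fin.sum_univ_three]
  · linear_combination (2 * u 0) * h
  · linear_combination (2 * u 1) * h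
  · linear_combination (2 * u 2) * h

/-- Every `SO(3)`-invariant polynomial on `ℝ³ × ℝ³` is `O(3)`-invariant. -/
theorem statement12 (P : V3 × V3 → ℝ) (hP : IsPolyFun6 P)
    (hinv : ∀ k ∈ SO3, ∀ x y : V3, P (k.mulVec x, k.mulVec y) = P (x, y)) :
    ∀ k : Mat3, k * k.transpose = 1 → ∀ x y : V3, P (k.mulVec x, k.mulVec y) = P (x, y) := by
  -- First: P is invariant under simultaneous negation.
  have hneg : ∀ x y : V3, P (-x, -y) = P (x, y) := by
    intro x y
    obtain ⟨u, hu, hux, huy⟩ := exists_unit_orth x y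
    have hmem : rotPi u ∈ SO3 := ⟨rotPi_orth u hu, rotPi_det u hu⟩
    have := hinv (rotPi u) hmem x y
    rwa [rotPi_mulVec u x hux, rotPi_mulVec u y huy] at this
  intro k hk x y
  have hdet : k.det * k.det = 1 := by
    have := congrArg Matrix.det hk
    rwa [Matrix.det_mul, Matrix.det_transpose, Matrix.det_one] at this
  have hcases : k.det = 1 ∨ k.det = -1 := by
    rcases mul_self_eq_one_iff.mp hdet with h | h
    · exact Or.inl h
    · exact Or.inr h
  rcases hcases with h | h
  · exact hinv k ⟨hk, h⟩ x y
  · -- k = -(-k), and -k ∈ SO3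
    have hk' : (-k) * (-k).transpose = 1 := by
      rw [Matrix.transpose_neg, neg_mul_neg, hk]
    have hdet' : (-k).det = 1 := by
      rw [Matrix.det_neg, h]
      norm_num
    have hmem : (-k) ∈ SO3 := ⟨hk', hdet'⟩
    have h1 : k.mulVec x = -((-k).mulVec x) := by
      rw [Matrix.neg_mulVec, neg_neg]
    have h2 : k.mulVec y = -((-k).mulVec y) := by
      rw [Matrix.neg_mulVec, neg_neg]
    rw [h1, h2, hneg ((-k).mulVec x) ((-k).mulVec y)]
    exact hinv (-k) hmem x y
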